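/- Let χ : ℝ^{2d} → ℝ^{2d} be a bi-Lipschitz bijection (χ and χ^{-1} Lipschitz). Then for every δ ∈ (0,1) there exists δ* with 0 < δ* < δ, depending only on χ and δ and independent of Γ, such that for every subset Γ ⊆ ℝ^{2d} one has χ(Γ_{δ*}) ⊆ (χ(Γ))_δ and (χ(Γ))_{δ*} ⊆ χ(Γ_δ). -/
import Mathlib


/-!
STATEMENT 6: if `χ` is a bi-Lipschitz bijection of `ℝ^{2d}`, then for every
`δ ∈ (0,1)` there is `δ* ∈ (0,δ)`, independent of `Γ`, such that for every
`Γ ⊆ ℝ^{2d}`: `χ(Γ_{δ*}) ⊆ (χ(Γ))_δ` and `(χ(Γ))_{δ*} ⊆ χ(Γ_δ)`.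
-/

open Real

noncomputable section

/-- The Japanese bracket `⟨z⟩ = (1 + |z|²)^{1/2}`. -/
def jap {n : ℕ} (z : EuclideanSpace ℝ (Fin n)) : ℝ := Real.sqrt (1 + ‖z‖ ^ 2)

/-- The `δ`-neighborhood `Γ_δ = {z : |z − z₀| < δ⟨z₀⟩ for some z₀ ∈ Γ}`. -/
def nbhd {n : ℕ} (Γ : Set (EuclideanSpace ℝ (Fin n))) (δ : ℝ) :
    Set (EuclideanSpace ℝ (Fin n)) :=
  {z | ∃ z₀ ∈ Γ, ‖z - z₀‖ < δ * jap z₀}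

lemma one_le_jap {n : ℕ} (z : EuclideanSpace ℝ (Fin n)) : 1 ≤ jap z := by
  rw [jap]
  nlinarith [Real.sq_sqrt (show (0:ℝ) ≤ 1 + ‖z‖ ^ 2 by positivity),
    Real.sqrt_nonneg (1 + ‖z‖ ^ 2), sq_nonneg ‖z‖]

lemma jap_le_one_add {n : ℕ} (z : EuclideanSpace ℝ (Fin n)) : jap z ≤ 1 + ‖z‖ := by
  rw [jap]
  have h := Real.sqrt_le_sqrt (show 1 + ‖z‖ ^ 2 ≤ (1 + ‖z‖) ^ 2 by nlinarith [norm_nonneg z])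
  rwa [Real.sqrt_sq (by positivity)] at h

lemma one_add_le_jap {n : ℕ} (z : EuclideanSpace ℝ (Fin n)) :
    1 + ‖z‖ ≤ Real.sqrt 2 * jap z := by
  rw [jap, ← Real.sqrt_mul (by norm_num)]
  calc 1 + ‖z‖ = Real.sqrt ((1 + ‖z‖) ^ 2) := (Real.sqrt_sq (by positivity)).symm
    _ ≤ Real.sqrt (2 * (1 + ‖z‖ ^ 2)) :=
        Real.sqrt_le_sqrt (by nlinarith [sq_nonneg (1 - ‖z‖)])

lemma jap_le_mul {n : ℕ} {a b : EuclideanSpace ℝ (Fin n)} {A B : ℝ}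
    (hA : 0 ≤ A) (hB : 0 ≤ B) (h : ‖a‖ ≤ A + B * ‖b‖) :
    jap a ≤ Real.sqrt 2 * (1 + A + B) * jap b := by
  have h1 : jap a ≤ 1 + ‖a‖ := jap_le_one_add a
  have h2 : 1 + ‖b‖ ≤ Real.sqrt 2 * jap b := one_add_le_jap b
  have hb : 0 ≤ ‖b‖ := norm_nonneg b
  have h3 : (1:ℝ) + A + B * ‖b‖ ≤ (1 + A + B) * (1 + ‖b‖) := by nlinarith
  have hs : (0:ℝ) ≤ 1 + A + B := by linarith
  calc jap a ≤ 1 + A + B * ‖b‖ := by linarith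
    _ ≤ (1 + A + B) * (1 + ‖b‖) := h3
    _ ≤ (1 + A + B) * (Real.sqrt 2 * jap b) := by
        exact mul_le_mul_of_nonneg_left h2 hs
    _ = Real.sqrt 2 * (1 + A + B) * jap b := by ring

set_option maxHeartbeats 1000000 in
theorem statement6 (d : ℕ)
    (χ ψ : EuclideanSpace ℝ (Fin (2 * d)) → EuclideanSpace ℝ (Fin (2 * d)))
    (K K' : NNReal) (hχ : LipschitzWith K χ) (hψ : LipschitzWith K' ψ)
    (hleft : Function.LeftInverse ψ χ) (hright : Function.RightInverse ψ χ)
    (δ : ℝ) (hδ0 : 0 < δ) (hδ1 : δ < 1) :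
    ∃ δs : ℝ, 0 < δs ∧ δs < δ ∧
      ∀ Γ : Set (EuclideanSpace ℝ (Fin (2 * d))),
        χ '' nbhd Γ δs ⊆ nbhd (χ '' Γ) δ ∧
        nbhd (χ '' Γ) δs ⊆ χ '' nbhd Γ δ := by
  set C : ℝ := ‖χ 0‖ with hC
  have hC0 : 0 ≤ C := norm_nonneg _
  have hK0 : (0:ℝ) ≤ K := K.coe_nonneg
  have hK'0 : (0:ℝ) ≤ K' := K'.coe_nonneg
  set L : ℝ := Real.sqrt 2 * (2 + C + K + K' + K' * C) with hL
  have hs2 : (1:ℝ) ≤ Real.sqrt 2 := by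
    rw [show (1:ℝ) = Real.sqrt 1 from Real.sqrt_one.symm]
    exact Real.sqrt_le_sqrt (by norm_num)
  have hL2 : (2:ℝ) ≤ L := by
    have : (2:ℝ) + C + K + K' + K' * C ≥ 2 := by nlinarith
    nlinarith
  have hL0 : (0:ℝ) ≤ L := by linarith
  set M : ℝ := 2 + (K + K') * L with hM
  have hM2 : (2:ℝ) ≤ M := by nlinarith
  have hM0 : (0:ℝ) < M := by linarith
  refine ⟨δ / M, by positivity, ?_, ?_⟩
  · rw [div_lt_iff₀ hM0]; nlinarith
  have hKLM : (K:ℝ) * L < M := by nlinarith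
  have hK'LM : (K':ℝ) * L < M := by nlinarith
  intro Γ
  -- bracket comparisons
  have hdist : ∀ z : EuclideanSpace ℝ (Fin (2 * d)), ‖χ z - χ 0‖ ≤ K * ‖z - 0‖ := by
    intro z
    have := hχ.dist_le_mul z 0
    simpa [dist_eq_norm] using this
  have hb1 : ∀ z : EuclideanSpace ℝ (Fin (2 * d)), jap (χ z) ≤ L * jap z := by
    intro z
    have h : ‖χ z‖ ≤ C + K * ‖z‖ := by
      have h1 := hdist z
      have h2 : ‖χ z‖ ≤ ‖χ z - χ 0‖ + ‖χ 0‖ := by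
        simpa using norm_add_le (χ z - χ 0) (χ 0)
      simp only [sub_zero] at h1
      linarith
    have := jap_le_mul hC0 hK0 h
    have hj : 0 ≤ jap z := le_trans zero_le_one (one_le_jap z)
    have hle : Real.sqrt 2 * (1 + C + K) ≤ L := by
      rw [hL]
      exact mul_le_mul_of_nonneg_left (by nlinarith) (Real.sqrt_nonneg 2)
    nlinarith
  have hψ0 : ψ (χ 0) = 0 := hleft 0
  have hb2 : ∀ z : EuclideanSpace ℝ (Fin (2 * d)), jap z ≤ L * jap (χ z) := by
    intro z
    have h1 : ‖ψ (χ z) - ψ (χ 0)‖ ≤ K' * ‖χ z - χ 0‖ := by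
      have := hψ.dist_le_mul (χ z) (χ 0)
      simpa [dist_eq_norm] using this
    rw [hleft z, hψ0, sub_zero] at h1
    have h2 : ‖χ z - χ 0‖ ≤ ‖χ z‖ + ‖χ 0‖ := norm_sub_le _ _
    have h : ‖z‖ ≤ K' * C + K' * ‖χ z‖ := by nlinarith
    have := jap_le_mul (by positivity) hK'0 h
    have hj : 0 ≤ jap (χ z) := le_trans zero_le_one (one_le_jap (χ z))
    have hle : Real.sqrt 2 * (1 + K' * C + K') ≤ L := by
      rw [hL]
      exact mul_le_mul_of_nonneg_left (by nlinarith) (Real.sqrt_nonneg 2)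
    nlinarith
  constructor
  · rintro _ ⟨z, ⟨z₀, hz₀Γ, hz⟩, rfl⟩
    refine ⟨χ z₀, Set.mem_image_of_mem χ hz₀Γ, ?_⟩
    have h1 : ‖χ z - χ z₀‖ ≤ K * ‖z - z₀‖ := by
      have := hχ.dist_le_mul z z₀
      simpa [dist_eq_norm] using this
    have hjz : (1:ℝ) ≤ jap (χ z₀) := one_le_jap _
    have hj0 : (0:ℝ) ≤ jap z₀ := le_trans zero_le_one (one_le_jap z₀)
    have hb := hb2 z₀
    have hKL := hKLM
    have hδs : (0:ℝ) < δ / M := by positivity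
    -- ‖χ z - χ z₀‖ ≤ K * (δ/M) * jap z₀ ≤ K*(δ/M)*L*jap(χ z₀) < δ * jap (χ z₀)
    have step1 : ‖χ z - χ z₀‖ ≤ (K:ℝ) * (δ / M) * jap z₀ := by nlinarith
    have step2 : (K:ℝ) * (δ / M) * jap z₀ ≤ (K:ℝ) * (δ / M) * (L * jap (χ z₀)) := by
      apply mul_le_mul_of_nonneg_left hb (by positivity)
    have step3 : (K:ℝ) * (δ / M) * (L * jap (χ z₀)) < δ * jap (χ z₀) := by
      have h4 : (K:ℝ) * L / M < 1 := (div_lt_one hM0).mpr hKL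
      have h5 : (0:ℝ) < δ * jap (χ z₀) := mul_pos hδ0 (lt_of_lt_of_le zero_lt_one hjz)
      calc (K:ℝ) * (δ / M) * (L * jap (χ z₀))
          = ((K:ℝ) * L / M) * (δ * jap (χ z₀)) := by ring
        _ < 1 * (δ * jap (χ z₀)) := mul_lt_mul_of_pos_right h4 h5
        _ = δ * jap (χ z₀) := one_mul _
    linarith
  · rintro w ⟨_, ⟨z₀, hz₀Γ, rfl⟩, hw⟩
    refine ⟨ψ w, ⟨z₀, hz₀Γ, ?_⟩, hright w⟩
    have h1 : ‖ψ w - ψ (χ z₀)‖ ≤ K' * ‖w - χ z₀‖ := by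
      have := hψ.dist_le_mul w (χ z₀)
      simpa [dist_eq_norm] using this
    rw [hleft z₀] at h1
    have hjz : (1:ℝ) ≤ jap z₀ := one_le_jap _
    have hj0 : (0:ℝ) ≤ jap (χ z₀) := le_trans zero_le_one (one_le_jap _)
    have hb := hb1 z₀
    have hKL := hK'LM
    have step1 : ‖ψ w - z₀‖ ≤ (K':ℝ) * (δ / M) * jap (χ z₀) := by
      calc ‖ψ w - z₀‖ ≤ (K':ℝ) * ‖w - χ z₀‖ := h1
        _ ≤ (K':ℝ) * (δ / M * jap (χ z₀)) := mul_le_mul_of_nonneg_left hw.le hK'0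
        _ = (K':ℝ) * (δ / M) * jap (χ z₀) := by ring
    have step2 : (K':ℝ) * (δ / M) * jap (χ z₀) ≤ (K':ℝ) * (δ / M) * (L * jap z₀) := by
      apply mul_le_mul_of_nonneg_left hb (by positivity)
    have step3 : (K':ℝ) * (δ / M) * (L * jap z₀) < δ * jap z₀ := by
      have h4 : (K':ℝ) * L / M < 1 := (div_lt_one hM0).mpr hKL
      have h5 : (0:ℝ) < δ * jap z₀ := mul_pos hδ0 (lt_of_lt_of_le zero_lt_one hjz)
      calc (K':ℝ) * (δ / M) * (L * jap z₀)
          = ((K':ℝ) * L / M) * (δ * jap z₀) := by ring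
        _ < 1 * (δ * jap z₀) := mul_lt_mul_of_pos_right h4 h5
        _ = δ * jap z₀ := one_mul _
    linarith
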